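/- If R and S are invertible elements of A⊗A⊗A both satisfying the centralizing conditions R¹⊗R²⊗aR³ = R¹a⊗R²⊗R³, aR¹⊗R²⊗R³ = R¹⊗R²a⊗R³, R¹⊗aR²⊗R³ = R¹⊗R²⊗R³a (for all a ∈ A), and if S¹R³S²⊗R¹⊗R²S³ = 1⊗1⊗1 (written with the flip: S¹mR³S²⊗R¹nR²S³ = m⊗n evaluated at m = n = 1⊗1 in A⊗A), then S¹R²⊗S²R¹⊗S³R³ = 1⊗1⊗1, i.e. S²⊗S¹⊗S³ is a (left) inverse of R in the algebra A⊗A⊗A. -/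

import Mathlib

open TensorProduct

/-- If `R = ∑ᵢ xᵢ ⊗ yᵢ ⊗ zᵢ` and `S = ∑ⱼ uⱼ ⊗ vⱼ ⊗ wⱼ` are invertible
elements of the componentwise algebra `A ⊗ A ⊗ A` both satisfying the three centralizing
conditions, and `1 ⊗ 1 ⊗ 1 = S¹ ⊗ R³S²R¹ ⊗ R²S³`, then
`S¹R² ⊗ S²R¹ ⊗ S³R³ = 1 ⊗ 1 ⊗ 1`, i.e. `S² ⊗ S¹ ⊗ S³` is a (left) inverse of `R`. -/
theorem flip_of_inverse_braiding_is_inverse_R_matrix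
    (k A : Type*) [CommRing k] [Ring A] [Algebra k A]
    (ι κ : Type*) (s : Finset ι) (t : Finset κ)
    (x y z : ι → A) (u v w : κ → A)
    (hRunit : IsUnit (∑ i ∈ s, x i ⊗ₜ[k] y i ⊗ₜ[k] z i))
    (hSunit : IsUnit (∑ j ∈ t, u j ⊗ₜ[k] v j ⊗ₜ[k] w j))
    (hRcen3 : ∀ a : A,
      ∑ i ∈ s, x i ⊗ₜ[k] y i ⊗ₜ[k] (a * z i)
        = ∑ i ∈ s, (x i * a) ⊗ₜ[k] y i ⊗ₜ[k] z i)
    (hRcen1 : ∀ a : A,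
      ∑ i ∈ s, (a * x i) ⊗ₜ[k] y i ⊗ₜ[k] z i
        = ∑ i ∈ s, x i ⊗ₜ[k] (y i * a) ⊗ₜ[k] z i)
    (hRcen2 : ∀ a : A,
      ∑ i ∈ s, x i ⊗ₜ[k] (a * y i) ⊗ₜ[k] z i
        = ∑ i ∈ s, x i ⊗ₜ[k] y i ⊗ₜ[k] (z i * a))
    (hScen3 : ∀ a : A,
      ∑ j ∈ t, u j ⊗ₜ[k] v j ⊗ₜ[k] (a * w j)
        = ∑ j ∈ t, (u j * a) ⊗ₜ[k] v j ⊗ₜ[k] w j)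
    (hScen1 : ∀ a : A,
      ∑ j ∈ t, (a * u j) ⊗ₜ[k] v j ⊗ₜ[k] w j
        = ∑ j ∈ t, u j ⊗ₜ[k] (v j * a) ⊗ₜ[k] w j)
    (hScen2 : ∀ a : A,
      ∑ j ∈ t, u j ⊗ₜ[k] (a * v j) ⊗ₜ[k] w j
        = ∑ j ∈ t, u j ⊗ₜ[k] v j ⊗ₜ[k] (w j * a))
    (hinv : ∑ i ∈ s, ∑ j ∈ t,
        u j ⊗ₜ[k] (z i * v j * x i) ⊗ₜ[k] (y i * w j)
      = (1 : A) ⊗ₜ[k] (1 : A) ⊗ₜ[k] (1 : A)) :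
    ∑ i ∈ s, ∑ j ∈ t,
        (u j * y i) ⊗ₜ[k] (v j * x i) ⊗ₜ[k] (w j * z i)
      = (1 : A) ⊗ₜ[k] (1 : A) ⊗ₜ[k] (1 : A) := by
  rw [← hinv]
  refine Finset.sum_congr rfl fun i _ => ?_
  -- Step 1: apply (id ⊗ mulRight (x i) ⊗ mulLeft (y i)) to hScen2 (z i)
  have h1 := congrArg (TensorProduct.map (TensorProduct.map (LinearMap.id (R := k) (M := A))
      (LinearMap.mulRight k (x i))) (LinearMap.mulLeft k (y i))) (hScen2 (z i))
  simp only [map_sum, TensorProduct.map_tmul, LinearMap.id_coe, id_eq,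
    LinearMap.mulRight_apply, LinearMap.mulLeft_apply] at h1
  -- Step 2: apply (id ⊗ mulRight (x i) ⊗ mulRight (z i)) to hScen3 (y i)
  have h2 := congrArg (TensorProduct.map (TensorProduct.map (LinearMap.id (R := k) (M := A))
      (LinearMap.mulRight k (x i))) (LinearMap.mulRight k (z i))) (hScen3 (y i))
  simp only [map_sum, TensorProduct.map_tmul, LinearMap.id_coe, id_eq,
    LinearMap.mulRight_apply] at h2
  symm
  calc ∑ j ∈ t, u j ⊗ₜ[k] (z i * v j * x i) ⊗ₜ[k] (y i * w j)
      = ∑ j ∈ t, u j ⊗ₜ[k] (v j * x i) ⊗ₜ[k] (y i * (w j * z i)) := h1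
    _ = ∑ j ∈ t, u j ⊗ₜ[k] (v j * x i) ⊗ₜ[k] (y i * w j * z i) := by
        simp [mul_assoc]
    _ = ∑ j ∈ t, (u j * y i) ⊗ₜ[k] (v j * x i) ⊗ₜ[k] (w j * z i) := h2
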